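/- Let n, m, p be nonnegative integers, and adopt the convention that a binomial coefficient C(a,b) equals 0 whenever a < 0, b < 0, or b > a. Then Σ_{k=0}^{n} Σ_{j=0}^{m} C(m,j) C(k−j, p−j) C(p, k−j) C(n+1, k+m−j) = C(n+1, p) C(n+1, m) − C(n+1−m, p−m) C(p, n+1−m). -/

import Mathlib

open Finset

noncomputable section

/-- Binomial coefficient on integers, with the convention that `C(a,b) = 0` whenever
`a < 0`, `b < 0`, or `b > a`. -/
def ichoose (a b : ℤ) : ℤ :=
  if 0 ≤ a ∧ 0 ≤ b ∧ b ≤ a then (a.toNat.choose b.toNat : ℤ) else 0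

lemma ichoose_eq_zero {a b : ℤ} (h : ¬(0 ≤ a ∧ 0 ≤ b ∧ b ≤ a)) : ichoose a b = 0 := by
  rw [ichoose, if_neg h]

lemma ichoose_of_nonneg {a b : ℤ} (ha : 0 ≤ a) (hb : 0 ≤ b) :
    ichoose a b = (a.toNat.choose b.toNat : ℤ) := by
  by_cases h : b ≤ a
  · rw [ichoose, if_pos ⟨ha, hb, h⟩]
  · rw [ichoose_eq_zero (by tauto), Nat.choose_eq_zero_of_lt (by omega), Nat.cast_zero]

lemma ichoose_natCast (a b : ℕ) : ichoose a b = (a.choose b : ℤ) := by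
  rw [ichoose_of_nonneg (by positivity) (by positivity)]
  simp

lemma ichoose_self {a : ℤ} (h : 0 ≤ a) : ichoose a a = 1 := by
  rw [ichoose_of_nonneg h h, Nat.choose_self, Nat.cast_one]

/-- Trinomial revision for `ichoose`. -/
lemma ichoose_tri {N a b : ℤ} (hN : 0 ≤ N) :
    ichoose N a * ichoose a b = ichoose N b * ichoose (N - b) (a - b) := by
  by_cases hb : 0 ≤ b
  · by_cases hba : b ≤ a
    · by_cases haN : a ≤ N
      · have ha : 0 ≤ a := le_trans hb hba
        rw [ichoose_of_nonneg hN ha, ichoose_of_nonneg ha hb, ichoose_of_nonneg hN hb,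
          ichoose_of_nonneg (by omega) (by omega)]
        rw [show (N - b).toNat = N.toNat - b.toNat by omega,
          show (a - b).toNat = a.toNat - b.toNat by omega]
        rw [← Nat.cast_mul, ← Nat.cast_mul, Nat.choose_mul (by omega)]
      · rw [ichoose_eq_zero (a := N) (b := a) (by omega),
          ichoose_eq_zero (a := N - b) (b := a - b) (by omega)]
        ring
    · rw [ichoose_eq_zero (a := a) (b := b) (by omega),
        ichoose_eq_zero (a := N - b) (b := a - b) (by omega)]
      ring
  · rw [ichoose_eq_zero (a := a) (b := b) (by omega),
      ichoose_eq_zero (a := N) (b := b) (by omega)]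
    ring

/-- Symmetry for `ichoose` with natural first argument. -/
lemma ichoose_symm (a : ℕ) (b : ℤ) : ichoose (a : ℤ) b = ichoose (a : ℤ) ((a : ℤ) - b) := by
  by_cases h : 0 ≤ b ∧ b ≤ (a : ℤ)
  · rw [ichoose_of_nonneg (by positivity) h.1, ichoose_of_nonneg (by positivity) (by omega)]
    rw [show ((a : ℤ) - b).toNat = a - b.toNat by omega, show ((a:ℤ)).toNat = a by omega,
      Nat.choose_symm (by omega)]
  · rw [ichoose_eq_zero (by omega), ichoose_eq_zero (by omega)]

/-- Vandermonde's identity for `ichoose`. -/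
lemma ichoose_vand (a b : ℕ) (c : ℤ) :
    ∑ t ∈ Finset.range (a + 1), ichoose (a : ℤ) (t : ℤ) * ichoose (b : ℤ) (c - (t : ℤ)) =
      ichoose ((a : ℤ) + (b : ℤ)) c := by
  rcases lt_or_ge c 0 with hc | hc
  · rw [ichoose_eq_zero (a := (a : ℤ) + b) (by omega)]
    refine Finset.sum_eq_zero fun t _ => ?_
    rw [ichoose_eq_zero (a := (b : ℤ)) (b := c - (t : ℤ)) (by omega), mul_zero]
  · lift c to ℕ using hc with cn
    have key : ∀ t : ℕ, ichoose (a : ℤ) (t : ℤ) * ichoose (b : ℤ) ((cn : ℤ) - (t : ℤ)) =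
        ((a.choose t * (if t ≤ cn then b.choose (cn - t) else 0) : ℕ) : ℤ) := by
      intro t
      by_cases h : t ≤ cn
      · rw [if_pos h, ichoose_natCast, show ((cn : ℤ) - t) = ((cn - t : ℕ) : ℤ) by omega,
          ichoose_natCast, Nat.cast_mul]
      · rw [if_neg h, ichoose_eq_zero (a := (b : ℤ)) (b := (cn : ℤ) - t) (by omega)]
        simp
    calc ∑ t ∈ Finset.range (a + 1), ichoose (a : ℤ) (t : ℤ) * ichoose (b : ℤ) ((cn : ℤ) - t)
        = ∑ t ∈ Finset.range (a + 1),
            ((a.choose t * (if t ≤ cn then b.choose (cn - t) else 0) : ℕ) : ℤ) :=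
          Finset.sum_congr rfl fun t _ => key t
      _ = ((∑ t ∈ Finset.range (a + 1),
            a.choose t * (if t ≤ cn then b.choose (cn - t) else 0) : ℕ) : ℤ) := by
          rw [Nat.cast_sum]
      _ = ((∑ t ∈ Finset.range (a + cn + 2),
            a.choose t * (if t ≤ cn then b.choose (cn - t) else 0) : ℕ) : ℤ) := by
          congr 1
          refine Finset.sum_subset (Finset.range_subset_range.2 (by omega)) fun t _ ht => ?_
          rw [Nat.choose_eq_zero_of_lt (by simp at ht ⊢; omega), zero_mul]
      _ = ((∑ t ∈ Finset.range (cn + 1),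
            a.choose t * (if t ≤ cn then b.choose (cn - t) else 0) : ℕ) : ℤ) := by
          congr 1
          refine (Finset.sum_subset (Finset.range_subset_range.2 (by omega)) fun t _ ht => ?_).symm
          rw [if_neg (by simp at ht ⊢; omega), mul_zero]
      _ = (((a + b).choose cn : ℕ) : ℤ) := by
          congr 1
          rw [Nat.add_choose_eq, Finset.Nat.sum_antidiagonal_eq_sum_range_succ_mk]
          exact Finset.sum_congr rfl fun t ht => by
            rw [if_pos (by simp at ht; omega)]
      _ = ichoose ((a : ℤ) + (b : ℤ)) (cn : ℤ) := by
          rw [← Nat.cast_add, ichoose_natCast]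

/-- Shifting a sum whose summand vanishes outside the shifted window. -/
lemma shift_sum (f : ℤ → ℤ) (j T : ℕ)
    (h1 : ∀ l : ℤ, l < 0 → f l = 0)
    (h2 : ∀ l : ℤ, (T : ℤ) < l + j → f l = 0) :
    ∑ k ∈ Finset.range (T + 1), f ((k : ℤ) - (j : ℤ)) = ∑ l ∈ Finset.range (T + 1), f (l : ℤ) := by
  have step1 : ∑ k ∈ Finset.range (T + 1), f ((k : ℤ) - (j : ℤ)) =
      ∑ k ∈ Finset.Ico j (T + 1), f ((k : ℤ) - (j : ℤ)) := by
    rw [range_eq_Ico]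
    refine (Finset.sum_subset (Finset.Ico_subset_Ico (Nat.zero_le _) le_rfl)
      fun k hk hk' => ?_).symm
    simp only [Finset.mem_Ico] at hk hk'
    exact h1 _ (by omega)
  rw [step1, Finset.sum_Ico_eq_sum_range]
  have step2 : ∀ i ∈ Finset.range (T + 1 - j), f (((j + i : ℕ) : ℤ) - (j : ℤ)) = f (i : ℤ) := by
    intro i _
    congr 1
    push_cast
    ring
  rw [Finset.sum_congr rfl step2]
  refine Finset.sum_subset (Finset.range_subset_range.2 (by omega)) fun l hl hl' => ?_
  simp only [Finset.mem_range] at hl hl'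
  exact h2 _ (by omega)

/-- Reflecting a sum whose summand vanishes at negative arguments. -/
lemma refl_sum (f : ℤ → ℤ) (p T : ℕ) (hpT : p ≤ T)
    (h1 : ∀ t : ℤ, t < 0 → f t = 0) :
    ∑ l ∈ Finset.range (T + 1), f ((p : ℤ) - (l : ℤ)) = ∑ t ∈ Finset.range (p + 1), f (t : ℤ) := by
  have step1 : ∑ l ∈ Finset.range (T + 1), f ((p : ℤ) - (l : ℤ)) =
      ∑ l ∈ Finset.range (p + 1), f ((p : ℤ) - (l : ℤ)) := by
    refine (Finset.sum_subset (Finset.range_subset_range.2 (by omega)) fun l hl hl' => ?_).symm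
    simp only [Finset.mem_range] at hl hl'
    exact h1 _ (by omega)
  rw [step1]
  have step2 : ∀ l ∈ Finset.range (p + 1), f ((p : ℤ) - (l : ℤ)) = f (((p - l : ℕ) : ℤ)) := by
    intro l hl
    simp only [Finset.mem_range] at hl
    congr 1
    omega
  rw [Finset.sum_congr rfl step2]
  exact Finset.sum_range_reflect (fun t => f (t : ℤ)) (p + 1)

/-- the combinatorial identity of Lemma 4.2. -/
theorem stmt_15 (n m p : ℕ) :
    ∑ k ∈ Finset.range (n + 1), ∑ j ∈ Finset.range (m + 1),
      ichoose (m : ℤ) (j : ℤ) * ichoose ((k : ℤ) - (j : ℤ)) ((p : ℤ) - (j : ℤ)) *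
        ichoose (p : ℤ) ((k : ℤ) - (j : ℤ)) *
        ichoose ((n : ℤ) + 1) ((k : ℤ) + (m : ℤ) - (j : ℤ)) =
    ichoose ((n : ℤ) + 1) (p : ℤ) * ichoose ((n : ℤ) + 1) (m : ℤ) -
      ichoose ((n : ℤ) + 1 - (m : ℤ)) ((p : ℤ) - (m : ℤ)) *
        ichoose (p : ℤ) ((n : ℤ) + 1 - (m : ℤ)) := by
  by_cases hp : p ≤ n + 1
  · -- main case
    -- the last row (k = n+1) equals the correction term
    have hlast : ∑ j ∈ Finset.range (m + 1),
        ichoose (m : ℤ) (j : ℤ) * ichoose (((n+1 : ℕ) : ℤ) - (j : ℤ)) ((p : ℤ) - (j : ℤ)) *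
          ichoose (p : ℤ) (((n+1 : ℕ) : ℤ) - (j : ℤ)) *
          ichoose ((n : ℤ) + 1) (((n+1 : ℕ) : ℤ) + (m : ℤ) - (j : ℤ)) =
        ichoose ((n : ℤ) + 1 - (m : ℤ)) ((p : ℤ) - (m : ℤ)) *
          ichoose (p : ℤ) ((n : ℤ) + 1 - (m : ℤ)) := by
      rw [Finset.sum_eq_single_of_mem m (Finset.self_mem_range_succ m) ?zero]
      case zero =>
        intro j hj hjm
        simp only [Finset.mem_range] at hj
        rw [ichoose_eq_zero (a := (n : ℤ) + 1) (b := ((n+1 : ℕ) : ℤ) + (m : ℤ) - (j : ℤ))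
          (by push_cast; omega), mul_zero]
      · rw [ichoose_self (a := (m : ℤ)) (by positivity),
          show ((n+1 : ℕ) : ℤ) + (m : ℤ) - (m : ℤ) = (n : ℤ) + 1 by push_cast; ring,
          ichoose_self (a := (n : ℤ) + 1) (by positivity),
          show ((n+1 : ℕ) : ℤ) - (m : ℤ) = (n : ℤ) + 1 - (m : ℤ) by push_cast; ring]
        ring
    -- the extended double sum
    have hB : ∑ k ∈ Finset.range (n + 2), ∑ j ∈ Finset.range (m + 1),
        ichoose (m : ℤ) (j : ℤ) * ichoose ((k : ℤ) - (j : ℤ)) ((p : ℤ) - (j : ℤ)) *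
          ichoose (p : ℤ) ((k : ℤ) - (j : ℤ)) *
          ichoose ((n : ℤ) + 1) ((k : ℤ) + (m : ℤ) - (j : ℤ)) =
        ichoose ((n : ℤ) + 1) (p : ℤ) * ichoose ((n : ℤ) + 1) (m : ℤ) := by
      rw [Finset.sum_comm]
      -- shift each inner sum
      have hshift : ∀ j ∈ Finset.range (m + 1),
          ∑ k ∈ Finset.range (n + 2),
            ichoose (m : ℤ) (j : ℤ) * ichoose ((k : ℤ) - (j : ℤ)) ((p : ℤ) - (j : ℤ)) *
              ichoose (p : ℤ) ((k : ℤ) - (j : ℤ)) *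
              ichoose ((n : ℤ) + 1) ((k : ℤ) + (m : ℤ) - (j : ℤ)) =
          ∑ l ∈ Finset.range (n + 2),
            ichoose (m : ℤ) (j : ℤ) * ichoose (l : ℤ) ((p : ℤ) - (j : ℤ)) *
              ichoose (p : ℤ) (l : ℤ) * ichoose ((n : ℤ) + 1) ((l : ℤ) + (m : ℤ)) := by
        intro j hj
        simp only [Finset.mem_range] at hj
        have := shift_sum (fun l => ichoose (m : ℤ) (j : ℤ) * ichoose l ((p : ℤ) - (j : ℤ)) *
          ichoose (p : ℤ) l * ichoose ((n : ℤ) + 1) (l + (m : ℤ))) j (n + 1)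
          (fun l hl => by
            show ichoose (m : ℤ) (j : ℤ) * ichoose l ((p : ℤ) - (j : ℤ)) *
              ichoose (p : ℤ) l * ichoose ((n : ℤ) + 1) (l + (m : ℤ)) = 0
            rw [ichoose_eq_zero (a := l) (b := (p : ℤ) - (j : ℤ)) (by omega)]
            ring)
          (fun l hl => by
            show ichoose (m : ℤ) (j : ℤ) * ichoose l ((p : ℤ) - (j : ℤ)) *
              ichoose (p : ℤ) l * ichoose ((n : ℤ) + 1) (l + (m : ℤ)) = 0
            rw [ichoose_eq_zero (a := (n : ℤ) + 1) (b := l + (m : ℤ)) (by omega), mul_zero])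
        calc ∑ k ∈ Finset.range (n + 2),
              ichoose (m : ℤ) (j : ℤ) * ichoose ((k : ℤ) - (j : ℤ)) ((p : ℤ) - (j : ℤ)) *
                ichoose (p : ℤ) ((k : ℤ) - (j : ℤ)) *
                ichoose ((n : ℤ) + 1) ((k : ℤ) + (m : ℤ) - (j : ℤ))
            = ∑ k ∈ Finset.range (n + 2),
              ichoose (m : ℤ) (j : ℤ) * ichoose ((k : ℤ) - (j : ℤ)) ((p : ℤ) - (j : ℤ)) *
                ichoose (p : ℤ) ((k : ℤ) - (j : ℤ)) *
                ichoose ((n : ℤ) + 1) (((k : ℤ) - (j : ℤ)) + (m : ℤ)) := by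
              refine Finset.sum_congr rfl fun k _ => ?_
              rw [show (k : ℤ) + (m : ℤ) - (j : ℤ) = ((k : ℤ) - (j : ℤ)) + (m : ℤ) by ring]
          _ = ∑ l ∈ Finset.range (n + 2),
              ichoose (m : ℤ) (j : ℤ) * ichoose (l : ℤ) ((p : ℤ) - (j : ℤ)) *
                ichoose (p : ℤ) (l : ℤ) * ichoose ((n : ℤ) + 1) ((l : ℤ) + (m : ℤ)) := this
      rw [Finset.sum_congr rfl hshift, Finset.sum_comm]
      -- inner Vandermonde in j
      have hvand : ∀ l ∈ Finset.range (n + 2),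
          ∑ j ∈ Finset.range (m + 1),
            ichoose (m : ℤ) (j : ℤ) * ichoose (l : ℤ) ((p : ℤ) - (j : ℤ)) *
              ichoose (p : ℤ) (l : ℤ) * ichoose ((n : ℤ) + 1) ((l : ℤ) + (m : ℤ)) =
          ichoose ((m : ℤ) + (l : ℤ)) (p : ℤ) *
            (ichoose (p : ℤ) (l : ℤ) * ichoose ((n : ℤ) + 1) ((l : ℤ) + (m : ℤ))) := by
        intro l _
        rw [← ichoose_vand m l (p : ℤ), Finset.sum_mul]
        refine Finset.sum_congr rfl fun j _ => ?_
        ring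
      rw [Finset.sum_congr rfl hvand]
      -- trinomial revision pointwise
      have htri : ∀ l ∈ Finset.range (n + 2),
          ichoose ((m : ℤ) + (l : ℤ)) (p : ℤ) *
            (ichoose (p : ℤ) (l : ℤ) * ichoose ((n : ℤ) + 1) ((l : ℤ) + (m : ℤ))) =
          ichoose ((n : ℤ) + 1) (p : ℤ) *
            (ichoose (p : ℤ) ((p : ℤ) - ((p : ℤ) - (l : ℤ))) *
              ichoose ((n : ℤ) + 1 - (p : ℤ)) ((m : ℤ) - ((p : ℤ) - (l : ℤ)))) := by
        intro l _
        have h1 : ichoose ((n : ℤ) + 1) ((l : ℤ) + (m : ℤ)) *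
            ichoose ((l : ℤ) + (m : ℤ)) (p : ℤ) =
            ichoose ((n : ℤ) + 1) (p : ℤ) *
              ichoose ((n : ℤ) + 1 - (p : ℤ)) ((l : ℤ) + (m : ℤ) - (p : ℤ)) :=
          ichoose_tri (by positivity)
        rw [show (m : ℤ) + (l : ℤ) = (l : ℤ) + (m : ℤ) by ring,
          show (p : ℤ) - ((p : ℤ) - (l : ℤ)) = (l : ℤ) by ring,
          show (m : ℤ) - ((p : ℤ) - (l : ℤ)) = (l : ℤ) + (m : ℤ) - (p : ℤ) by ring]
        linear_combination ichoose (p : ℤ) (l : ℤ) * h1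
      rw [Finset.sum_congr rfl htri, ← Finset.mul_sum]
      congr 1
      -- reflect and apply Vandermonde again
      have := refl_sum (fun t => ichoose (p : ℤ) ((p : ℤ) - t) *
        ichoose ((n : ℤ) + 1 - (p : ℤ)) ((m : ℤ) - t)) p (n + 1) hp
        (fun t ht => by
          show ichoose (p : ℤ) ((p : ℤ) - t) * ichoose ((n : ℤ) + 1 - (p : ℤ)) ((m : ℤ) - t) = 0
          rw [ichoose_eq_zero (a := (p : ℤ)) (b := (p : ℤ) - t) (by omega), zero_mul])
      rw [this]
      have hfin : ∑ t ∈ Finset.range (p + 1),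
          ichoose (p : ℤ) ((p : ℤ) - (t : ℤ)) *
            ichoose ((n : ℤ) + 1 - (p : ℤ)) ((m : ℤ) - (t : ℤ)) =
          ∑ t ∈ Finset.range (p + 1),
            ichoose (p : ℤ) (t : ℤ) * ichoose (((n + 1 - p : ℕ)) : ℤ) ((m : ℤ) - (t : ℤ)) := by
        refine Finset.sum_congr rfl fun t ht => ?_
        simp only [Finset.mem_range] at ht
        rw [← ichoose_symm p (t : ℤ), show (((n + 1 - p : ℕ)) : ℤ) = (n : ℤ) + 1 - (p : ℤ) by omega]
      rw [hfin, ichoose_vand p (n + 1 - p) (m : ℤ),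
        show ((p : ℤ) + ((n + 1 - p : ℕ) : ℤ)) = (n : ℤ) + 1 by omega]
    have hsplit := Finset.sum_range_succ (fun k => ∑ j ∈ Finset.range (m + 1),
      ichoose (m : ℤ) (j : ℤ) * ichoose ((k : ℤ) - (j : ℤ)) ((p : ℤ) - (j : ℤ)) *
        ichoose (p : ℤ) ((k : ℤ) - (j : ℤ)) *
        ichoose ((n : ℤ) + 1) ((k : ℤ) + (m : ℤ) - (j : ℤ))) (n + 1)
    rw [show n + 1 + 1 = n + 2 by ring] at hsplit
    rw [hB, hlast] at hsplit
    linarith [hsplit]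
  · -- degenerate case p > n + 1 : both sides vanish
    have hL : ∑ k ∈ Finset.range (n + 1), ∑ j ∈ Finset.range (m + 1),
        ichoose (m : ℤ) (j : ℤ) * ichoose ((k : ℤ) - (j : ℤ)) ((p : ℤ) - (j : ℤ)) *
          ichoose (p : ℤ) ((k : ℤ) - (j : ℤ)) *
          ichoose ((n : ℤ) + 1) ((k : ℤ) + (m : ℤ) - (j : ℤ)) = 0 := by
      refine Finset.sum_eq_zero fun k hk => Finset.sum_eq_zero fun j _ => ?_
      simp only [Finset.mem_range] at hk
      rw [ichoose_eq_zero (a := (k : ℤ) - (j : ℤ)) (b := (p : ℤ) - (j : ℤ)) (by omega)]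
      ring
    rw [hL, ichoose_eq_zero (a := (n : ℤ) + 1) (b := (p : ℤ)) (by omega),
      ichoose_eq_zero (a := (n : ℤ) + 1 - (m : ℤ)) (b := (p : ℤ) - (m : ℤ)) (by omega)]
    ring
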